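/- Let h(z) = 1 + κ|z|², let Ω = {z ∈ ℂ : h(z) > 0}, and let D be the operator (D g)(z) = h(z)² (∂g/∂z)(z). Then for every integer m ≥ 0, every function f smooth on Ω, and every z ∈ Ω, (D^m f)(z) = h(z)^{m+1} · (∂^m/∂z^m)[w ↦ h(w)^{m−1} f(w)](z). -/

import Mathlib

open Complex MeasureTheory Filter

/-- Wirtinger derivative ∂f/∂z = (1/2)(∂f/∂x − i ∂f/∂y). -/
noncomputable def wderiv (f : ℂ → ℂ) (z : ℂ) : ℂ :=
  (fderiv ℝ f z 1 - Complex.I * fderiv ℝ f z Complex.I) / 2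

/-- Anti-holomorphic Wirtinger derivative ∂f/∂z̄ = (1/2)(∂f/∂x + i ∂f/∂y). -/
noncomputable def wderivBar (f : ℂ → ℂ) (z : ℂ) : ℂ :=
  (fderiv ℝ f z 1 + Complex.I * fderiv ℝ f z Complex.I) / 2

/-- Twisted Laplacian L_κ^ν. -/
noncomputable def twistedLap (κ ν : ℝ) (f : ℂ → ℂ) (z : ℂ) : ℂ :=
  -(((1 + κ * Complex.normSq z : ℝ) : ℂ) ^ 2 * wderiv (wderivBar f) z
    + (ν : ℂ) * ((1 + κ * Complex.normSq z : ℝ) : ℂ) *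
        (z * wderiv f z - (starRingEnd ℂ) z * wderivBar f z)
    - (ν : ℂ) ^ 2 * ((Complex.normSq z : ℝ) : ℂ) * f z)

/-- (∇_α f)(z) = −(1+κ|z|²) ∂f/∂z + α z̄ f(z). -/
noncomputable def nabla (κ α : ℝ) (f : ℂ → ℂ) (z : ℂ) : ℂ :=
  -((1 + κ * Complex.normSq z : ℝ) : ℂ) * wderiv f z + (α : ℂ) * (starRingEnd ℂ) z * f z

/-- (∇*_α f)(z) = (1+κ|z|²) ∂f/∂z̄ + (α−κ) z f(z). -/
noncomputable def nablaStar (κ α : ℝ) (f : ℂ → ℂ) (z : ℂ) : ℂ :=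
  ((1 + κ * Complex.normSq z : ℝ) : ℂ) * wderivBar f z + ((α - κ : ℝ) : ℂ) * z * f z

/-- ∇_{ν+κ} ∘ ∇_{ν+2κ} ∘ ⋯ ∘ ∇_{ν+mκ} (the identity when m = 0). -/
noncomputable def nablaChain (κ : ℝ) : ℕ → ℝ → (ℂ → ℂ) → (ℂ → ℂ)
  | 0, _, f => f
  | m + 1, ν, f => nabla κ (ν + κ) (nablaChain κ m (ν + κ) f)

/-- (D g)(z) = (1+κ|z|²)² ∂g/∂z. -/
noncomputable def Dop (κ : ℝ) (g : ℂ → ℂ) (z : ℂ) : ℂ :=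
  ((1 + κ * Complex.normSq z : ℝ) : ℂ) ^ 2 * wderiv g z

/-- Generalized binomial coefficient C(r,k) for real r. -/
noncomputable def genBinom (r : ℝ) (k : ℕ) : ℝ :=
  (∏ i ∈ Finset.range k, (r - i)) / (Nat.factorial k)

/-- Jacobi polynomial P_j^{(a,b)}(x) with real parameters a, b. -/
noncomputable def jacobiP (a b : ℝ) (j : ℕ) (x : ℝ) : ℝ :=
  ∑ s ∈ Finset.range (j + 1),
    genBinom ((j : ℝ) + a) (j - s) * genBinom ((j : ℝ) + b) s *
      ((x - 1) / 2) ^ s * ((x + 1) / 2) ^ (j - s)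

/-- Pochhammer symbol (a)_n = a(a+1)⋯(a+n−1). -/
noncomputable def risingFactorial (a : ℝ) (n : ℕ) : ℝ :=
  ∏ i ∈ Finset.range n, (a + i)


/-- h(z) = 1 + κ|z|² as a complex-valued function. -/
noncomputable def Hk (κ : ℝ) (z : ℂ) : ℂ := ((1 + κ * Complex.normSq z : ℝ) : ℂ)

namespace WAux

lemma Hk_eq (κ : ℝ) (z : ℂ) : Hk κ z = 1 + (κ : ℂ) * (z * (starRingEnd ℂ) z) := by
  rw [Complex.mul_conj, Hk]; push_cast; ring

lemma contDiff_Hk (κ : ℝ) : ContDiff ℝ (⊤ : ℕ∞) (Hk κ) := by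
  have : Hk κ = fun z => 1 + (κ : ℂ) * (z * (starRingEnd ℂ) z) := funext (Hk_eq κ)
  rw [this]
  exact contDiff_const.add (contDiff_const.mul (contDiff_id.mul Complex.conjCLE.contDiff))

lemma wderiv_congr_of_isOpen {f g : ℂ → ℂ} {U : Set ℂ} (hU : IsOpen U)
    (h : ∀ w ∈ U, f w = g w) {z : ℂ} (hz : z ∈ U) : wderiv f z = wderiv g z := by
  have he : f =ᶠ[nhds z] g := Filter.eventuallyEq_of_mem (hU.mem_nhds hz) h
  unfold wderiv; rw [he.fderiv_eq]

lemma wderiv_iter_congr {f g : ℂ → ℂ} {U : Set ℂ} (hU : IsOpen U)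
    (h : ∀ w ∈ U, f w = g w) (n : ℕ) : ∀ z ∈ U, wderiv^[n] f z = wderiv^[n] g z := by
  induction n with
  | zero => exact h
  | succ n ih =>
    intro z hz
    rw [Function.iterate_succ_apply', Function.iterate_succ_apply']
    exact wderiv_congr_of_isOpen hU ih hz

lemma wderiv_add {f g : ℂ → ℂ} {z : ℂ} (hf : DifferentiableAt ℝ f z)
    (hg : DifferentiableAt ℝ g z) :
    wderiv (fun w => f w + g w) z = wderiv f z + wderiv g z := by
  unfold wderiv
  rw [fderiv_fun_add hf hg]
  simp only [ContinuousLinearMap.add_apply]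
  ring

lemma wderiv_const (c : ℂ) (z : ℂ) : wderiv (fun _ => c) z = 0 := by
  unfold wderiv
  rw [fderiv_fun_const]
  simp

lemma wderiv_mul {f g : ℂ → ℂ} {z : ℂ} (hf : DifferentiableAt ℝ f z)
    (hg : DifferentiableAt ℝ g z) :
    wderiv (fun w => f w * g w) z = wderiv f z * g z + f z * wderiv g z := by
  unfold wderiv
  rw [fderiv_fun_mul hf hg]
  simp only [ContinuousLinearMap.add_apply, ContinuousLinearMap.smul_apply, smul_eq_mul]
  ring

lemma wderiv_const_mul (c : ℂ) {g : ℂ → ℂ} {z : ℂ} (hg : DifferentiableAt ℝ g z) :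
    wderiv (fun w => c * g w) z = c * wderiv g z := by
  rw [wderiv_mul (differentiableAt_const c) hg, wderiv_const]
  ring

lemma wderiv_id (z : ℂ) : wderiv (fun w => w) z = 1 := by
  unfold wderiv
  rw [fderiv_id']
  simp [Complex.I_mul_I]

lemma wderiv_conj (z : ℂ) : wderiv (fun w => (starRingEnd ℂ) w) z = 0 := by
  have h : fderiv ℝ (fun w : ℂ => (starRingEnd ℂ) w) z = Complex.conjCLE := by
    have : (fun w : ℂ => (starRingEnd ℂ) w) = ⇑Complex.conjCLE := by
      funext w; rw [Complex.conjCLE_apply]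
    rw [this]
    exact Complex.conjCLE.fderiv
  unfold wderiv
  rw [h]
  simp [Complex.conjCLE_apply, Complex.conj_I]

lemma diffAt_conj (z : ℂ) : DifferentiableAt ℝ (fun w : ℂ => (starRingEnd ℂ) w) z :=
  Complex.conjCLE.differentiable.differentiableAt

lemma wderiv_Hk (κ : ℝ) (z : ℂ) : wderiv (Hk κ) z = (κ : ℂ) * (starRingEnd ℂ) z := by
  have hrw : Hk κ = fun w => (1 : ℂ) + (κ : ℂ) * (w * (starRingEnd ℂ) w) := funext (Hk_eq κ)
  rw [hrw]
  have hd1 : DifferentiableAt ℝ (fun w : ℂ => w * (starRingEnd ℂ) w) z :=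
    differentiableAt_fun_id.mul (diffAt_conj z)
  rw [wderiv_add (differentiableAt_const 1) ((differentiableAt_const _).fun_mul hd1),
    wderiv_const, wderiv_const_mul _ hd1,
    wderiv_mul differentiableAt_fun_id (diffAt_conj z), wderiv_id, wderiv_conj]
  ring

lemma wderiv_pow {g : ℂ → ℂ} {z : ℂ} (hg : DifferentiableAt ℝ g z) (k : ℕ) :
    wderiv (fun w => g w ^ (k + 1)) z = (k + 1 : ℕ) * g z ^ k * wderiv g z := by
  induction k with
  | zero => simp [pow_one]
  | succ k ih =>
    have hrw : (fun w => g w ^ (k + 2)) = fun w => g w * g w ^ (k + 1) := by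
      funext w; ring
    rw [hrw, wderiv_mul hg (hg.fun_pow (k + 1)), ih]
    push_cast
    ring

lemma contDiffOn_wderiv {u : ℂ → ℂ} {U : Set ℂ} (hU : IsOpen U)
    (hu : ContDiffOn ℝ (⊤ : ℕ∞) u U) : ContDiffOn ℝ (⊤ : ℕ∞) (wderiv u) U := by
  have hd : ContDiffOn ℝ (⊤ : ℕ∞) (fderiv ℝ u) U := by
    refine hu.fderiv_of_isOpen hU ?_
    exact le_of_eq (by norm_cast)
  have h1 : ContDiffOn ℝ (⊤ : ℕ∞) (fun z => fderiv ℝ u z 1) U :=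
    (ContinuousLinearMap.apply ℝ ℂ (1 : ℂ)).contDiff.comp_contDiffOn hd
  have hI : ContDiffOn ℝ (⊤ : ℕ∞) (fun z => fderiv ℝ u z Complex.I) U :=
    (ContinuousLinearMap.apply ℝ ℂ Complex.I).contDiff.comp_contDiffOn hd
  exact (h1.sub (contDiffOn_const.mul hI)).div_const 2

lemma contDiffOn_wderiv_iter {u : ℂ → ℂ} {U : Set ℂ} (hU : IsOpen U)
    (hu : ContDiffOn ℝ (⊤ : ℕ∞) u U) (n : ℕ) :
    ContDiffOn ℝ (⊤ : ℕ∞) (wderiv^[n] u) U := by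
  induction n with
  | zero => exact hu
  | succ n ih =>
    rw [Function.iterate_succ_apply']
    exact contDiffOn_wderiv hU ih

lemma diffAt_of_contDiffOn {u : ℂ → ℂ} {U : Set ℂ} (hU : IsOpen U)
    (hu : ContDiffOn ℝ (⊤ : ℕ∞) u U) {z : ℂ} (hz : z ∈ U) : DifferentiableAt ℝ u z :=
  (hu.contDiffAt (hU.mem_nhds hz)).differentiableAt (by norm_cast)

lemma leibniz (κ : ℝ) {u : ℂ → ℂ} {U : Set ℂ} (hU : IsOpen U)
    (hu : ContDiffOn ℝ (⊤ : ℕ∞) u U) (n : ℕ) :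
    ∀ z ∈ U, wderiv^[n + 1] (fun w => Hk κ w * u w) z
      = Hk κ z * wderiv^[n + 1] u z
        + ((n : ℂ) + 1) * κ * (starRingEnd ℂ) z * wderiv^[n] u z := by
  induction n with
  | zero =>
    intro z hz
    have hdu : DifferentiableAt ℝ u z := diffAt_of_contDiffOn hU hu hz
    simp only [zero_add, Function.iterate_one, Function.iterate_zero, id_eq]
    rw [wderiv_mul ((contDiff_Hk κ).differentiable (by norm_cast)).differentiableAt
      hdu, wderiv_Hk]
    ring
  | succ n ih =>
    intro z hz
    have hun1 : ContDiffOn ℝ (⊤ : ℕ∞) (wderiv^[n + 1] u) U := contDiffOn_wderiv_iter hU hu (n + 1)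
    have hun : ContDiffOn ℝ (⊤ : ℕ∞) (wderiv^[n] u) U := contDiffOn_wderiv_iter hU hu n
    have hdHk : ∀ w : ℂ, DifferentiableAt ℝ (Hk κ) w := fun w =>
      ((contDiff_Hk κ).differentiable (by norm_cast)).differentiableAt
    have hd1 : DifferentiableAt ℝ (wderiv^[n + 1] u) z := diffAt_of_contDiffOn hU hun1 hz
    have hd0 : DifferentiableAt ℝ (wderiv^[n] u) z := diffAt_of_contDiffOn hU hun hz
    rw [Function.iterate_succ_apply']
    have step1 : wderiv (wderiv^[n + 1] (fun w => Hk κ w * u w)) z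
        = wderiv (fun w => Hk κ w * wderiv^[n + 1] u w
            + ((n : ℂ) + 1) * κ * ((starRingEnd ℂ) w * wderiv^[n] u w)) z := by
      refine wderiv_congr_of_isOpen hU (fun w hw => ?_) hz
      rw [ih w hw]; ring
    rw [step1]
    have hdA : DifferentiableAt ℝ (fun w => Hk κ w * wderiv^[n + 1] u w) z :=
      (hdHk z).mul hd1
    have hdcp : DifferentiableAt ℝ (fun w : ℂ => (starRingEnd ℂ) w * wderiv^[n] u w) z :=
      (diffAt_conj z).mul hd0
    have hdB : DifferentiableAt ℝ
        (fun w => ((n : ℂ) + 1) * κ * ((starRingEnd ℂ) w * wderiv^[n] u w)) z :=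
      (differentiableAt_const _).mul hdcp
    rw [wderiv_add hdA hdB, wderiv_mul (hdHk z) hd1, wderiv_Hk,
      wderiv_const_mul _ hdcp, wderiv_mul (diffAt_conj z) hd0, wderiv_conj]
    rw [Function.iterate_succ_apply' wderiv (n + 1) u, Function.iterate_succ_apply' wderiv n u]
    push_cast
    ring

end WAux

open WAux in
theorem stmt7 (κ : ℝ) (m : ℕ) (f : ℂ → ℂ)
    (hf : ContDiffOn ℝ (⊤ : ℕ∞) f {z : ℂ | 0 < 1 + κ * Complex.normSq z})
    (z : ℂ) (hz : 0 < 1 + κ * Complex.normSq z) :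
    (Dop κ)^[m] f z
      = ((1 + κ * Complex.normSq z : ℝ) : ℂ) ^ (m + 1) *
          wderiv^[m]
            (fun w => ((1 + κ * Complex.normSq w : ℝ) : ℂ) ^ ((m : ℤ) - 1) * f w) z := by
  have hUopen : IsOpen {z : ℂ | 0 < 1 + κ * Complex.normSq z} :=
    isOpen_lt continuous_const
      (continuous_const.add (continuous_const.mul Complex.continuous_normSq))
  set U : Set ℂ := {z : ℂ | 0 < 1 + κ * Complex.normSq z} with hUdef
  have hne : ∀ w ∈ U, Hk κ w ≠ 0 := fun w hw =>
    Complex.ofReal_ne_zero.mpr (ne_of_gt hw)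
  have hdHk : ∀ w : ℂ, DifferentiableAt ℝ (Hk κ) w := fun w =>
    ((contDiff_Hk κ).differentiable (by norm_cast)).differentiableAt
  set G : ℕ → ℂ → ℂ := fun m w => Hk κ w ^ m * (Hk κ w)⁻¹ * f w with hG
  have hGsmooth : ∀ k, ContDiffOn ℝ (⊤ : ℕ∞) (G k) U := fun k =>
    (((contDiff_Hk κ).contDiffOn.pow k).mul ((contDiff_Hk κ).contDiffOn.inv hne)).mul hf
  have key : ∀ k, ∀ z ∈ U, (Dop κ)^[k] f z = Hk κ z ^ (k + 1) * wderiv^[k] (G k) z := by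
    intro k
    induction k with
    | zero =>
      intro z hz
      simp only [Function.iterate_zero, id_eq, pow_one, pow_zero, hG, one_mul]
      field_simp [hne z hz]
      ring
    | succ k ih =>
      intro z hz
      rw [Function.iterate_succ_apply']
      show Hk κ z ^ 2 * wderiv ((Dop κ)^[k] f) z = _
      have hdG : DifferentiableAt ℝ (wderiv^[k] (G k)) z :=
        diffAt_of_contDiffOn hUopen (contDiffOn_wderiv_iter hUopen (hGsmooth k) k) hz
      have hA : wderiv ((Dop κ)^[k] f) z
          = wderiv (fun w => Hk κ w ^ (k + 1) * wderiv^[k] (G k) w) z :=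
        wderiv_congr_of_isOpen hUopen (fun w hw => ih w hw) hz
      have hGrec : G (k + 1) = fun w => Hk κ w * G k w := by
        funext w; simp only [hG]; ring
      rw [hA, wderiv_mul ((hdHk z).fun_pow (k + 1)) hdG, wderiv_pow (hdHk z) k, wderiv_Hk,
        ← Function.iterate_succ_apply' wderiv k (G k), hGrec,
        leibniz κ hUopen (hGsmooth k) k z hz]
      push_cast
      ring
  have hzU : z ∈ U := hz
  have hiter : wderiv^[m] (fun w => ((1 + κ * Complex.normSq w : ℝ) : ℂ) ^ ((m : ℤ) - 1) * f w) z
      = wderiv^[m] (G m) z := by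
    refine wderiv_iter_congr hUopen (fun w hw => ?_) m z hzU
    show Hk κ w ^ ((m : ℤ) - 1) * f w = G m w
    rw [zpow_sub_one₀ (hne w hw) m, zpow_natCast]
  rw [hiter]
  exact key m z hzU
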